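/- (2-Route 2-Bus system, uncongested case.) Let α₁ > α₂ > 0 and ρ > 0. Suppose x₁, x₂, f, g₁, g₂, λ₁, λ₂ ∈ ℝ satisfy x₁ + x₂ = 1, x₁ ≥ 0, x₂ ≥ 0, g₁ = ρx₁ + f, g₂ = ρx₂ − f, λ₁ = g₁, λ₂ = g₂, λ₁ = λ₂ (equal locational marginal prices, since the line is uncongested), and the user-equilibrium condition α₁x₁ + ρλ₁ = α₂x₂ + ρλ₂. Then x₁ = α₂/(α₁+α₂), x₂ = α₁/(α₁+α₂), g₁ = g₂ = ρ/2, and f = ρ(α₁−α₂)/(2(α₁+α₂)). Consequently the power system social cost Φ_P := (1/2)(g₁² + g₂²) = ρ²/4 does not depend on (α₁, α₂) or on the line capacity f̄, and the transportation social cost Φ_T := α₁x₁² + α₂x₂² = α₁α₂/(α₁+α₂) does not depend on f̄ and has strictly positive partial derivatives ∂Φ_T/∂α₁ = α₂²/(α₁+α₂)² > 0 and ∂Φ_T/∂α₂ = α₁²/(α₁+α₂)² > 0 on {(α₁,α₂) : α₁, α₂ > 0}; hence no generalized Braess' paradox occurs for the 2-Route 2-Bus coupled system when the power network is uncongested. 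-/

import Mathlib

/-- 2-Route 2-Bus coupled system, uncongested power line: the GUE has the stated closed
form, the power cost `Φ_P = ρ²/4` is parameter-independent, the transportation cost is
`Φ_T = α₁α₂/(α₁+α₂)`, and `Φ_T` has strictly positive partial derivatives in `α₁` and `α₂`
(so no generalized Braess' paradox occurs). -/
theorem two_route_two_bus_uncongested
    (α₁ α₂ ρ : ℝ) (h21 : α₂ < α₁) (h2 : 0 < α₂) (hρ : 0 < ρ)
    (x₁ x₂ f g₁ g₂ l₁ l₂ : ℝ)
    (hsum : x₁ + x₂ = 1) (hx₁ : 0 ≤ x₁) (hx₂ : 0 ≤ x₂)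
    (hg₁ : g₁ = ρ * x₁ + f) (hg₂ : g₂ = ρ * x₂ - f)
    (hl₁ : l₁ = g₁) (hl₂ : l₂ = g₂) (hll : l₁ = l₂)
    (hUE : α₁ * x₁ + ρ * l₁ = α₂ * x₂ + ρ * l₂) :
    x₁ = α₂ / (α₁ + α₂) ∧ x₂ = α₁ / (α₁ + α₂) ∧
    g₁ = ρ / 2 ∧ g₂ = ρ / 2 ∧
    f = ρ * (α₁ - α₂) / (2 * (α₁ + α₂)) ∧
    (1 / 2) * (g₁ ^ 2 + g₂ ^ 2) = ρ ^ 2 / 4 ∧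
    α₁ * x₁ ^ 2 + α₂ * x₂ ^ 2 = α₁ * α₂ / (α₁ + α₂) ∧
    HasDerivAt (fun a : ℝ => a * (α₂ / (a + α₂)) ^ 2 + α₂ * (a / (a + α₂)) ^ 2)
      (α₂ ^ 2 / (α₁ + α₂) ^ 2) α₁ ∧
    0 < α₂ ^ 2 / (α₁ + α₂) ^ 2 ∧
    HasDerivAt (fun a : ℝ => α₁ * (a / (α₁ + a)) ^ 2 + a * (α₁ / (α₁ + a)) ^ 2)
      (α₁ ^ 2 / (α₁ + α₂) ^ 2) α₂ ∧
    0 < α₁ ^ 2 / (α₁ + α₂) ^ 2 := by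
  have h1 : 0 < α₁ := lt_trans h2 h21
  have hs : (0:ℝ) < α₁ + α₂ := by linarith
  have hne : α₁ + α₂ ≠ 0 := ne_of_gt hs
  have hbal : α₁ * x₁ = α₂ * x₂ := by
    rw [hll] at hUE; linarith
  have hx1 : x₁ = α₂ / (α₁ + α₂) := by
    field_simp; nlinarith [hbal, hsum]
  have hx2 : x₂ = α₁ / (α₁ + α₂) := by
    field_simp; nlinarith [hbal, hsum]
  have hgg : g₁ = g₂ := by rw [← hl₁, ← hl₂, hll]
  have hg1 : g₁ = ρ / 2 := by
    have : ρ * x₁ + f = ρ * x₂ - f := by rw [← hg₁, ← hg₂, hgg]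
    nlinarith [hsum]
  have hg2 : g₂ = ρ / 2 := hgg ▸ hg1
  have hf : f = ρ * (α₁ - α₂) / (2 * (α₁ + α₂)) := by
    have hfe : f = g₁ - ρ * x₁ := by rw [hg₁]; ring
    rw [hfe, hg1, hx1]; field_simp; ring
  refine ⟨hx1, hx2, hg1, hg2, hf, ?_, ?_, ?_, ?_, ?_, ?_⟩
  · rw [hg1, hg2]; ring
  · rw [hx1, hx2]; field_simp; ring
  · have hid : HasDerivAt (fun a : ℝ => a + α₂) 1 α₁ := by
      simpa using (hasDerivAt_id α₁).add_const α₂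
    have hq : HasDerivAt (fun a : ℝ => α₂ / (a + α₂))
        ((0 * (α₁ + α₂) - α₂ * 1) / (α₁ + α₂) ^ 2) α₁ :=
      (hasDerivAt_const α₁ α₂).div hid hne
    have hq2 : HasDerivAt (fun a : ℝ => a / (a + α₂))
        ((1 * (α₁ + α₂) - α₁ * 1) / (α₁ + α₂) ^ 2) α₁ :=
      (hasDerivAt_id α₁).div hid hne
    have hD := ((hasDerivAt_id α₁).mul (hq.pow 2)).add
      ((hq2.pow 2).const_mul α₂)
    convert hD using 1
    · rfl
    · rfl
    · funext a; simp only [Pi.add_apply, Pi.mul_apply, Pi.pow_apply, id_eq]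
    simp only [id_eq, Nat.cast_ofNat, Pi.pow_apply]
    field_simp
    ring
  · positivity
  · have hid : HasDerivAt (fun a : ℝ => α₁ + a) 1 α₂ := by
      simpa using (hasDerivAt_id α₂).const_add α₁
    have hne' : α₁ + α₂ ≠ 0 := hne
    have hq : HasDerivAt (fun a : ℝ => α₁ / (α₁ + a))
        ((0 * (α₁ + α₂) - α₁ * 1) / (α₁ + α₂) ^ 2) α₂ :=
      (hasDerivAt_const α₂ α₁).div hid hne'
    have hq2 : HasDerivAt (fun a : ℝ => a / (α₁ + a))
        ((1 * (α₁ + α₂) - α₂ * 1) / (α₁ + α₂) ^ 2) α₂ :=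
      (hasDerivAt_id α₂).div hid hne'
    have hD := ((hq2.pow 2).const_mul α₁).add
      ((hasDerivAt_id α₂).mul (hq.pow 2))
    convert hD using 1
    · rfl
    · rfl
    · funext a; simp only [Pi.add_apply, Pi.mul_apply, Pi.pow_apply, id_eq]
    simp only [id_eq, Nat.cast_ofNat, Pi.pow_apply]
    field_simp
    ring
  · positivity
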